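/- arXiv:1110.1821 — 3 statements merged into one kernel-verified Lean document; each statement's English description precedes it below -/
import Mathlib

section
/- If A is a block-diagonal matrix with blocks B (of size m×m) and C (of size (n−m)×(n−m)), then Ferm_k(A) = Ferm_k(B) · Ferm_k(C). -/
/-- The number of cycles of a permutation, counting fixed points as 1-cycles. -/
def cycleCount {α : Type*} [Fintype α] [DecidableEq α] (π : Equiv.Perm α) : ℕ :=
  π.cycleType.card + (Finset.univ.filter fun a => π a = a).card

/-- The fermionant of a square matrix with parameter `k`. -/
def ferm {α : Type*} [Fintype α] [DecidableEq α] {R : Type*} [CommRing R]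
    (k : R) (A : Matrix α α R) : R :=
  (-1 : R) ^ (Fintype.card α) *
    ∑ π : Equiv.Perm α, (-k) ^ (cycleCount π) * ∏ i, A i (π i)

section aux
open Equiv Equiv.Perm Finset

variable {α β : Type*} [Fintype α] [DecidableEq α] [Fintype β] [DecidableEq β]

def leftEquiv (α β : Type*) : α ≃ {x : α ⊕ β // x.isLeft = true} where
  toFun a := ⟨Sum.inl a, rfl⟩
  invFun x := x.1.getLeft x.2
  left_inv a := rfl
  right_inv := by rintro ⟨(a|b), h⟩ <;> simp at h ⊢

def rightEquiv (α β : Type*) : β ≃ {x : α ⊕ β // x.isRight = true} where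
  toFun b := ⟨Sum.inr b, rfl⟩
  invFun x := x.1.getRight x.2
  left_inv a := rfl
  right_inv := by rintro ⟨(a|b), h⟩ <;> simp at h ⊢

omit [Fintype α] [DecidableEq α] [Fintype β] [DecidableEq β] in
lemma sumCongr_one_eq_extendDomain (σ : Perm α) :
    Equiv.sumCongr σ (1 : Perm β) = σ.extendDomain (leftEquiv α β) := by
  ext x
  cases x with
  | inl a =>
    rw [Perm.extendDomain_apply_subtype σ (leftEquiv α β) (b := Sum.inl a) rfl]
    rfl
  | inr b =>
    rw [Perm.extendDomain_apply_not_subtype _ _ (b := Sum.inr b) (by simp)]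
    rfl

omit [Fintype α] [DecidableEq α] [Fintype β] [DecidableEq β] in
lemma one_sumCongr_eq_extendDomain (τ : Perm β) :
    Equiv.sumCongr (1 : Perm α) τ = τ.extendDomain (rightEquiv α β) := by
  ext x
  cases x with
  | inl a =>
    rw [Perm.extendDomain_apply_not_subtype _ _ (b := Sum.inl a) (by simp)]
    rfl
  | inr b =>
    rw [Perm.extendDomain_apply_subtype τ (rightEquiv α β) (b := Sum.inr b) rfl]
    rfl

lemma cycleType_sumCongr (σ : Perm α) (τ : Perm β) :
    Equiv.Perm.cycleType (Equiv.sumCongr σ τ) = σ.cycleType + τ.cycleType := by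
  have h1 : Equiv.sumCongr σ τ = Equiv.sumCongr σ (1 : Perm β) * Equiv.sumCongr (1 : Perm α) τ := by
    rw [Perm.sumCongr_mul, mul_one, one_mul]
  have hd : Perm.Disjoint (Equiv.sumCongr σ (1 : Perm β)) (Equiv.sumCongr (1 : Perm α) τ) := by
    intro x
    cases x with
    | inl a => right; rfl
    | inr b => left; rfl
  rw [h1, hd.cycleType_mul, sumCongr_one_eq_extendDomain, one_sumCongr_eq_extendDomain,
    cycleType_extendDomain, cycleType_extendDomain]

lemma cycleCount_sumCongr (σ : Perm α) (τ : Perm β) :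
    cycleCount (Equiv.sumCongr σ τ) = cycleCount σ + cycleCount τ := by
  unfold cycleCount
  rw [cycleType_sumCongr, Multiset.card_add]
  have : (Finset.univ.filter fun x : α ⊕ β => Equiv.sumCongr σ τ x = x).card
      = (Finset.univ.filter fun a => σ a = a).card + (Finset.univ.filter fun b => τ b = b).card := by
    simp only [Finset.card_filter]
    rw [Fintype.sum_sum_type]
    simp
  omega

end aux


open Equiv Equiv.Perm Finset

/-- The fermionant of a block-diagonal matrix with blocks `B` (of size `m × m`) and
`C` (of size `(n-m) × (n-m)`) is the product of the fermionants of the blocks. -/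
theorem ferm_blockDiagonal {m l : ℕ} {R : Type*} [CommRing R] (k : R)
    (B : Matrix (Fin m) (Fin m) R) (C : Matrix (Fin l) (Fin l) R) :
    ferm k (Matrix.fromBlocks B 0 0 C) = ferm k B * ferm k C := by
  classical
  have key : (∑ π : Perm (Fin m ⊕ Fin l),
        (-k) ^ (cycleCount π) * ∏ i, (Matrix.fromBlocks B 0 0 C) i (π i))
      = (∑ σ : Perm (Fin m), (-k) ^ (cycleCount σ) * ∏ i, B i (σ i)) *
        (∑ τ : Perm (Fin l), (-k) ^ (cycleCount τ) * ∏ i, C i (τ i)) := by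
    convert Eq.symm <|
      sum_subset (M := R)
        (subset_univ ((sumCongrHom (Fin m) (Fin l)).range : Set (Perm (Fin m ⊕ Fin l))).toFinset) ?_
    · simp_rw [sum_mul_sum, ← sum_product', univ_product_univ]
      refine sum_nbij (fun σ ↦ σ.fst.sumCongr σ.snd) ?_ ?_ ?_ ?_
      · intro σ₁₂ _
        erw [Set.mem_toFinset, MonoidHom.mem_range]
        use σ₁₂
        simp only [sumCongrHom_apply]
      · intro σ₁ _ σ₂ _
        dsimp only
        intro h
        have h2 : ∀ x, Perm.sumCongr σ₁.fst σ₁.snd x = Perm.sumCongr σ₂.fst σ₂.snd x :=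
          DFunLike.congr_fun h
        simp only [Sum.map_inr, Sum.map_inl, Perm.sumCongr_apply, Sum.forall, Sum.inl.injEq,
          Sum.inr.injEq] at h2
        ext x
        · exact congrArg Fin.val (h2.left x)
        · exact congrArg Fin.val (h2.right x)
      · intro σ hσ
        erw [Set.mem_toFinset, MonoidHom.mem_range] at hσ
        obtain ⟨σ₁₂, hσ₁₂⟩ := hσ
        use σ₁₂
        rw [← hσ₁₂]
        simp
      · simp only [forall_prop_of_true, Prod.forall, mem_univ]
        intro σ₁ σ₂
        rw [Fintype.prod_sum_type]
        simp_rw [Equiv.sumCongr_apply, Sum.map_inr, Sum.map_inl, Matrix.fromBlocks_apply₁₁,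
          Matrix.fromBlocks_apply₂₂]
        rw [cycleCount_sumCongr, pow_add]
        ring
    · rintro σ - hσn
      have h1 : ¬∀ x, ∃ y, Sum.inl y = σ (Sum.inl x) := by
        rw [Set.mem_toFinset] at hσn
        simpa only [Set.MapsTo, Set.mem_range, forall_exists_index, forall_apply_eq_imp_iff] using
          mt mem_sumCongrHom_range_of_perm_mapsTo_inl hσn
      obtain ⟨a, ha⟩ := not_forall.mp h1
      cases' hx : σ (Sum.inl a) with a2 b
      · have hn := (not_exists.mp ha) a2
        exact absurd hx.symm hn
      · rw [Finset.prod_eq_zero (Finset.mem_univ (Sum.inl a)), mul_zero]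
        rw [hx, Matrix.fromBlocks_apply₁₂, Matrix.zero_apply]
  unfold ferm
  rw [key, Fintype.card_sum, Fintype.card_fin, Fintype.card_fin, pow_add]
  ring
end

section
/- Let G be a finite simple undirected graph on n > 4 vertices with adjacency matrix A. Then Ferm_2(A) = (-1)^n Σ over Hamiltonian-style circuit partitions P of G of (-2)^{c_2(P)} (-4)^{c'(P)}, where c_2(P) is the number of 2-cycles (back-and-forth traversals of a single edge) and c'(P) the number of cycles of length ≥ 3 in P. Equivalently, each permutation π with Π_i A_{i,π(i)} ≠ 0 has all cycles of length ≥ 2 forming cycles in G, and circuit partitions with c' cycles of length ≥ 3 correspond to exactly 2^{c'} such permutations. -/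
open Finset

/-- The number of 2-cycles (transpositions) in the cycle decomposition of `π`. -/
def twoCycleCount {α : Type*} [Fintype α] [DecidableEq α] (π : Equiv.Perm α) : ℕ :=
  (Finset.univ.filter fun a => π a ≠ a ∧ π (π a) = a).card / 2

/-- The number of cycles of length at least 3 in the cycle decomposition of `π`. -/
def longCycleCount {α : Type*} [Fintype α] [DecidableEq α] (π : Equiv.Perm α) : ℕ :=
  (π.cycleType.filter fun l => 3 ≤ l).card

/-- Two permutations determine the same circuit partition if they have the same
cycle-orbits and each traverses every cycle in the same or the reversed direction. -/
def SameCircuitPartition {α : Type*} (π π' : Equiv.Perm α) : Prop :=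
  (∀ a b, π.SameCycle a b ↔ π'.SameCycle a b) ∧ ∀ a, π' a = π a ∨ π' a = π⁻¹ a

instance {α : Type*} [Fintype α] [DecidableEq α] (π π' : Equiv.Perm α) :
    Decidable (SameCircuitPartition π π') := by
  unfold SameCircuitPartition; infer_instance

set_option linter.unusedSectionVars false
section Aux
open Finset Equiv Equiv.Perm
variable {α : Type*} [Fintype α] [DecidableEq α]

/-- period two: orbit is {b, π b} -/
theorem per2 {π : Perm α} {b x : α} (h2 : π (π b) = b) (hs : π.SameCycle b x) :
    x = b ∨ x = π b := by
  obtain ⟨k, hk⟩ := hs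
  have h2' : (π ^ 2) b = b := by simpa [pow_succ] using h2
  obtain ⟨q, r, hr, rfl⟩ : ∃ q r : ℤ, (r = 0 ∨ r = 1) ∧ k = 2 * q + r := by
    refine ⟨k / 2, k % 2, ?_, (Int.mul_ediv_add_emod k 2).symm ▸ by ring⟩
    omega
  have hq : (π ^ (2 * q)) b = b := by
    have := Equiv.Perm.zpow_apply_eq_self_of_apply_eq_self (f := π ^ (2:ℤ)) (x := b)
      (by simpa using h2') q
    rw [zpow_mul]; exact this
  rcases hr with rfl | rfl
  · left; simpa [hq] using hk.symm
  · right
    rw [show (2*q+1:ℤ) = 1 + 2*q by ring, zpow_add, Perm.mul_apply, hq] at hk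
    simpa using hk.symm

/-- Lemma A -/
theorem sameCycle_iff_mem_support {π c : Perm α} (hc : c ∈ π.cycleFactorsFinset)
    {a : α} (ha : a ∈ c.support) {b : α} : π.SameCycle a b ↔ b ∈ c.support := by
  have hco : c = π.cycleOf a := Equiv.Perm.cycle_is_cycleOf ha hc
  have haπ : a ∈ π.support := Equiv.Perm.mem_cycleFactorsFinset_support_le hc ha
  rw [hco, Equiv.Perm.mem_support_cycleOf_iff, and_iff_left haπ]

theorem mem_support_self_of_factor {π c : Perm α} (hc : c ∈ π.cycleFactorsFinset)
    {a : α} (ha : a ∈ c.support) : π a = c a := by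
  exact (Equiv.Perm.mem_cycleFactorsFinset_iff.mp hc).2 a ha |>.symm

/-- support invariance under π and π⁻¹ -/
theorem apply_mem_of_factor {π c : Perm α} (hc : c ∈ π.cycleFactorsFinset)
    {a : α} (ha : a ∈ c.support) : π a ∈ c.support := by
  rw [mem_support_self_of_factor hc ha]; exact Equiv.Perm.apply_mem_support.mpr ha

theorem inv_eq_of_factor {π c : Perm α} (hc : c ∈ π.cycleFactorsFinset)
    {a : α} (ha : a ∈ c.support) : π⁻¹ a = c⁻¹ a := by
  have h1 : c⁻¹ a ∈ c.support := by
    rwa [← Equiv.Perm.support_inv, Equiv.Perm.apply_mem_support, Equiv.Perm.support_inv]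
  have h2 := mem_support_self_of_factor hc h1
  rw [show c (c⁻¹ a) = a from c.apply_symm_apply a] at h2
  exact Equiv.Perm.inv_eq_iff_eq.mpr h2.symm

theorem inv_apply_mem_of_factor {π c : Perm α} (hc : c ∈ π.cycleFactorsFinset)
    {a : α} (ha : a ∈ c.support) : π⁻¹ a ∈ c.support := by
  rw [inv_eq_of_factor hc ha]
  rwa [← Equiv.Perm.support_inv, Equiv.Perm.apply_mem_support, Equiv.Perm.support_inv]

theorem support_subset_of_per2 {π : Perm α} {c : Perm α} (hc : c ∈ π.cycleFactorsFinset)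
    {a : α} (ha : a ∈ c.support) (h2 : π (π a) = a) : c.support ⊆ {a, π a} := by
  intro x hx
  have hsc : π.SameCycle a x := (sameCycle_iff_mem_support hc ha).mpr hx
  rcases per2 h2 hsc with rfl | rfl <;> simp

theorem long_inv_ne {π c : Perm α} (hc : c ∈ π.cycleFactorsFinset)
    (hcard : 3 ≤ c.support.card) {a : α} (ha : a ∈ c.support) : π⁻¹ a ≠ π a := by
  intro h
  have h2 : π (π a) = a := by
    rw [← h, show π (π⁻¹ a) = a from π.apply_symm_apply a]
  have := Finset.card_le_card (support_subset_of_per2 hc ha h2)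
  have : c.support.card ≤ 2 := le_trans this (Finset.card_insert_le _ _ |>.trans (by simp))
  omega

theorem swap_per2 {π c : Perm α} (hc : c ∈ π.cycleFactorsFinset)
    (hcard : c.support.card = 2) {a : α} (ha : a ∈ c.support) :
    π (π a) = a ∧ π⁻¹ a = π a := by
  obtain ⟨x, y, hxy, rfl⟩ := Equiv.Perm.card_support_eq_two.mp hcard
  have hca : π a = Equiv.swap x y a := mem_support_self_of_factor hc ha
  have hmem : π a ∈ (Equiv.swap x y).support := apply_mem_of_factor hc ha
  have hca2 : π (π a) = Equiv.swap x y (Equiv.swap x y a) := by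
    rw [mem_support_self_of_factor hc hmem, hca]
  rw [Equiv.swap_apply_self] at hca2
  refine ⟨hca2, ?_⟩
  exact Equiv.Perm.inv_eq_iff_eq.mpr hca2.symm

theorem pi_ne_of_support {π c : Perm α} (hc : c ∈ π.cycleFactorsFinset)
    {a : α} (ha : a ∈ c.support) : π a ≠ a := by
  rw [mem_support_self_of_factor hc ha]
  exact Equiv.Perm.mem_support.mp ha

/-- Uniformity: a direction choice propagates along a long cycle. -/
theorem uniform {π π' : Perm α}
    (hSC : ∀ a b, π.SameCycle a b ↔ π'.SameCycle a b)
    {c : Perm α} (hc : c ∈ π.cycleFactorsFinset) (hcard : 3 ≤ c.support.card)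
    {a : α} (ha : a ∈ c.support) (h0 : π' a = π a)
    (hdir : ∀ x, π' x = π x ∨ π' x = π⁻¹ x) :
    ∀ b ∈ c.support, π' b = π b := by
  have key : ∀ b ∈ c.support, π' b = π b → π' (π b) = π (π b) := by
    intro b hb hπ'b
    rcases hdir (π b) with h | h
    · exact h
    exfalso
    have h2 : π' (π' b) = b := by rw [hπ'b, h]; exact π.symm_apply_apply b
    have hsub : c.support ⊆ {b, π' b} := by
      intro x hx
      have hx' : π.SameCycle b x := (sameCycle_iff_mem_support hc hb).mpr hx
      rcases per2 h2 ((hSC b x).mp hx') with rfl | rfl <;> simp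
    have h3 : ({b, π' b} : Finset α).card ≤ 2 :=
      le_trans (Finset.card_insert_le _ _) (by simp)
    have := (Finset.card_le_card hsub).trans h3
    omega
  have main : ∀ k : ℕ, (π ^ k) a ∈ c.support ∧ π' ((π ^ k) a) = π ((π ^ k) a) := by
    intro k
    induction k with
    | zero =>
      refine ⟨?_, ?_⟩ <;> simp only [pow_zero, Equiv.Perm.one_apply] <;> assumption
    | succ k ih =>
      obtain ⟨hb, hb'⟩ := ih
      have h1 : (π ^ (k+1)) a = π ((π ^ k) a) := by rw [pow_succ']; rfl
      refine ⟨by rw [h1]; exact apply_mem_of_factor hc hb, by rw [h1]; exact key _ hb hb'⟩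
  intro b hb
  obtain ⟨k, -, rfl⟩ := ((sameCycle_iff_mem_support hc ha).mpr hb).exists_pow_eq'
  exact (main k).2

/-- The permutation that acts as `π⁻¹` on a bi-invariant set `T` and as `π` elsewhere. -/
def pflip (π : Perm α) (T : Finset α) (hf : ∀ a ∈ T, π a ∈ T) (hi : ∀ a ∈ T, π⁻¹ a ∈ T) :
    Perm α where
  toFun a := if a ∈ T then π⁻¹ a else π a
  invFun b := if b ∈ T then π b else π⁻¹ b
  left_inv a := by
    by_cases h : a ∈ T
    · simp [h, show π.symm a ∈ T from hi a h]
    · have h2 : π a ∉ T := fun hm => h (by simpa using hi _ hm)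
      simp [h, h2]
  right_inv b := by
    by_cases h : b ∈ T
    · simp [h, hf b h]
    · have h2 : π.symm b ∉ T := fun hm => h (by simpa using hf _ hm)
      simp [h, h2]

theorem pflip_apply (π : Perm α) (T : Finset α) (hf hi) (a : α) :
    pflip π T hf hi a = if a ∈ T then π⁻¹ a else π a := rfl

theorem support_disj {π c d : Perm α} (hc : c ∈ π.cycleFactorsFinset)
    (hd : d ∈ π.cycleFactorsFinset) (hne : c ≠ d) : Disjoint c.support d.support :=
  (Equiv.Perm.cycleFactorsFinset_pairwise_disjoint π hc hd hne).disjoint_support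

/-- Act as `π⁻¹` on the cycles in `S` and as `π` elsewhere. -/
def circFlip (π : Perm α) (S : Finset (Perm α)) : Perm α :=
  pflip π ((S ∩ π.cycleFactorsFinset).biUnion Equiv.Perm.support)
    (by
      intro a ha
      rw [Finset.mem_biUnion] at ha ⊢
      obtain ⟨c, hc, hac⟩ := ha
      exact ⟨c, hc, apply_mem_of_factor (Finset.mem_inter.mp hc).2 hac⟩)
    (by
      intro a ha
      rw [Finset.mem_biUnion] at ha ⊢
      obtain ⟨c, hc, hac⟩ := ha
      exact ⟨c, hc, inv_apply_mem_of_factor (Finset.mem_inter.mp hc).2 hac⟩)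

theorem circFlip_apply_mem {π : Perm α} {S : Finset (Perm α)} {c : Perm α}
    (hcS : c ∈ S) (hcf : c ∈ π.cycleFactorsFinset) {a : α} (ha : a ∈ c.support) :
    circFlip π S a = π⁻¹ a := by
  rw [circFlip, pflip_apply, if_pos]
  exact Finset.mem_biUnion.mpr ⟨c, Finset.mem_inter.mpr ⟨hcS, hcf⟩, ha⟩

theorem circFlip_apply_not_mem {π : Perm α} {S : Finset (Perm α)} {c : Perm α}
    (hcS : c ∉ S) (hcf : c ∈ π.cycleFactorsFinset) {a : α} (ha : a ∈ c.support) :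
    circFlip π S a = π a := by
  rw [circFlip, pflip_apply, if_neg]
  intro hmem
  obtain ⟨d, hd, had⟩ := Finset.mem_biUnion.mp hmem
  obtain ⟨hdS, hdf⟩ := Finset.mem_inter.mp hd
  have hne : c ≠ d := fun h => hcS (h ▸ hdS)
  exact Finset.disjoint_left.mp (support_disj hcf hdf hne) ha had

theorem circFlip_dir (π : Perm α) (S : Finset (Perm α)) (a : α) :
    circFlip π S a = π a ∨ circFlip π S a = π⁻¹ a := by
  rw [circFlip, pflip_apply]
  split_ifs with h
  · exact Or.inr rfl
  · exact Or.inl rfl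

theorem circFlip_sameCycle {π : Perm α} (hfpf : ∀ i, π i ≠ i) (S : Finset (Perm α))
    (a b : α) : π.SameCycle a b ↔ (circFlip π S).SameCycle a b := by
  set c := π.cycleOf a with hcdef
  have hcf : c ∈ π.cycleFactorsFinset :=
    Equiv.Perm.cycleOf_mem_cycleFactorsFinset_iff.mpr (Equiv.Perm.mem_support.mpr (hfpf a))
  have ha : a ∈ c.support :=
    Equiv.Perm.mem_support_cycleOf_iff.mpr
      ⟨Equiv.Perm.SameCycle.refl _ _, Equiv.Perm.mem_support.mpr (hfpf a)⟩
  have hcyc : c.IsCycle := (Equiv.Perm.mem_cycleFactorsFinset_iff.mp hcf).1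
  by_cases hc : c ∈ S
  · have hfac : c⁻¹ ∈ (circFlip π S).cycleFactorsFinset := by
      rw [Equiv.Perm.mem_cycleFactorsFinset_iff]
      refine ⟨hcyc.inv, fun b hb => ?_⟩
      rw [Equiv.Perm.support_inv] at hb
      rw [circFlip_apply_mem hc hcf hb, inv_eq_of_factor hcf hb]
    have ha' : a ∈ c⁻¹.support := by rwa [Equiv.Perm.support_inv]
    rw [sameCycle_iff_mem_support hcf ha, sameCycle_iff_mem_support hfac ha',
      Equiv.Perm.support_inv]
  · have hfac : c ∈ (circFlip π S).cycleFactorsFinset := by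
      rw [Equiv.Perm.mem_cycleFactorsFinset_iff]
      refine ⟨hcyc, fun b hb => ?_⟩
      rw [circFlip_apply_not_mem hc hcf hb, mem_support_self_of_factor hcf hb]
    rw [sameCycle_iff_mem_support hcf ha, sameCycle_iff_mem_support hfac ha]

theorem longCycleCount_eq_card_filter (π : Perm α) :
    longCycleCount π = (π.cycleFactorsFinset.filter fun c => 3 ≤ c.support.card).card := by
  unfold longCycleCount
  rw [Equiv.Perm.cycleType_def, Multiset.filter_map, Multiset.card_map]
  rw [Finset.card_def, Finset.filter_val]
  rfl

theorem count_scp {π : Perm α} (hfpf : ∀ i, π i ≠ i) :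
    (Finset.univ.filter fun π' => SameCircuitPartition π π').card = 2 ^ longCycleCount π := by
  set L := π.cycleFactorsFinset.filter (fun c => 3 ≤ c.support.card) with hLdef
  have himg : (Finset.univ.filter fun π' => SameCircuitPartition π π')
      = L.powerset.image (circFlip π) := by
    ext π'
    simp only [Finset.mem_filter, Finset.mem_univ, true_and, Finset.mem_image,
      Finset.mem_powerset]
    constructor
    · rintro ⟨hSC, hdir⟩
      refine ⟨L.filter (fun c => ∃ a ∈ c.support, π' a ≠ π a), Finset.filter_subset _ _, ?_⟩
      ext a
      set c := π.cycleOf a with hcdef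
      have hcf : c ∈ π.cycleFactorsFinset :=
        Equiv.Perm.cycleOf_mem_cycleFactorsFinset_iff.mpr (Equiv.Perm.mem_support.mpr (hfpf a))
      have ha : a ∈ c.support :=
        Equiv.Perm.mem_support_cycleOf_iff.mpr
          ⟨Equiv.Perm.SameCycle.refl _ _, Equiv.Perm.mem_support.mpr (hfpf a)⟩
      have hcyc : c.IsCycle := (Equiv.Perm.mem_cycleFactorsFinset_iff.mp hcf).1
      have h2le : 2 ≤ c.support.card := hcyc.two_le_card_support
      by_cases h3 : 3 ≤ c.support.card
      · have hcL : c ∈ L := Finset.mem_filter.mpr ⟨hcf, h3⟩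
        by_cases hcS : c ∈ L.filter (fun c => ∃ a ∈ c.support, π' a ≠ π a)
        · -- π' is π⁻¹ on this cycle
          obtain ⟨-, b, hb, hbne⟩ := Finset.mem_filter.mp hcS
          have hbinv : π' b = π⁻¹ b := (hdir b).resolve_left hbne
          have hcf' : c⁻¹ ∈ (π⁻¹).cycleFactorsFinset := by
            rw [Equiv.Perm.mem_cycleFactorsFinset_iff]
            refine ⟨hcyc.inv, fun x hx => ?_⟩
            rw [Equiv.Perm.support_inv] at hx
            rw [inv_eq_of_factor hcf hx]
          have huni := uniform (π := π⁻¹) (π' := π')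
            (fun x y => (Equiv.Perm.sameCycle_inv).trans (hSC x y))
            hcf' (by rwa [Equiv.Perm.support_inv])
            (by rwa [Equiv.Perm.support_inv] : b ∈ c⁻¹.support)
            hbinv
            (fun x => by rw [inv_inv]; exact (hdir x).symm)
          have hinva : π' a = π⁻¹ a := huni a (by rwa [Equiv.Perm.support_inv])
          rw [circFlip_apply_mem hcS hcf ha, hinva]
        · rw [circFlip_apply_not_mem hcS hcf ha]
          by_contra hne
          exact hcS (Finset.mem_filter.mpr ⟨hcL, a, ha, Ne.symm hne⟩)
      · have hcard2 : c.support.card = 2 := by omega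
        have hcS : c ∉ L.filter (fun c => ∃ a ∈ c.support, π' a ≠ π a) := by
          intro h
          have h5 := (Finset.mem_filter.mp (Finset.mem_filter.mp h).1).2
          omega
        rw [circFlip_apply_not_mem hcS hcf ha]
        rcases hdir a with h | h
        · exact h.symm
        · rw [h, (swap_per2 hcf hcard2 ha).2]
    · rintro ⟨S, hSL, rfl⟩
      exact ⟨circFlip_sameCycle hfpf S, circFlip_dir π S⟩
  have key : ∀ S S' : Finset (Perm α), S ⊆ L → S' ⊆ L → circFlip π S = circFlip π S' →
      ∀ c, c ∈ S → c ∉ S' → False := by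
    intro S S' hS hS' he c hc hc'
    have hcL : c ∈ L := hS hc
    obtain ⟨hcf, h3⟩ := Finset.mem_filter.mp hcL
    obtain ⟨a, ha⟩ := Finset.card_pos.mp (by omega : 0 < c.support.card)
    have e1 : circFlip π S a = π⁻¹ a := circFlip_apply_mem hc hcf ha
    have e2 : circFlip π S' a = π a := circFlip_apply_not_mem hc' hcf ha
    rw [he, e2] at e1
    exact long_inv_ne hcf h3 ha e1.symm
  have hinj : Set.InjOn (circFlip π) L.powerset := by
    intro S₁ h₁ S₂ h₂ heq
    rw [Finset.mem_coe, Finset.mem_powerset] at h₁ h₂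
    ext c
    constructor
    · intro hc; by_contra hc'; exact key S₁ S₂ h₁ h₂ heq c hc hc'
    · intro hc; by_contra hc'; exact key S₂ S₁ h₂ h₁ heq.symm c hc hc'
  rw [himg, Finset.card_image_of_injOn hinj, Finset.card_powerset,
    longCycleCount_eq_card_filter]

theorem twoCycleCount_eq (π : Perm α) :
    twoCycleCount π = (π.cycleFactorsFinset.filter fun c => c.support.card = 2).card := by
  set F2 := π.cycleFactorsFinset.filter (fun c => c.support.card = 2) with hF2
  have hset : (Finset.univ.filter fun a => π a ≠ a ∧ π (π a) = a)
      = F2.biUnion Equiv.Perm.support := by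
    ext a
    simp only [Finset.mem_filter, Finset.mem_univ, true_and, Finset.mem_biUnion]
    constructor
    · rintro ⟨hne, h2⟩
      have hcf : π.cycleOf a ∈ π.cycleFactorsFinset :=
        Equiv.Perm.cycleOf_mem_cycleFactorsFinset_iff.mpr (Equiv.Perm.mem_support.mpr hne)
      have ha : a ∈ (π.cycleOf a).support :=
        Equiv.Perm.mem_support_cycleOf_iff.mpr
          ⟨Equiv.Perm.SameCycle.refl _ _, Equiv.Perm.mem_support.mpr hne⟩
      refine ⟨π.cycleOf a, Finset.mem_filter.mpr ⟨hcf, ?_⟩, ha⟩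
      have hsub := support_subset_of_per2 hcf ha h2
      have hsup : ({a, π a} : Finset α) ⊆ (π.cycleOf a).support := by
        intro x hx
        rcases Finset.mem_insert.mp hx with rfl | hx
        · exact ha
        · rw [Finset.mem_singleton.mp hx]
          exact apply_mem_of_factor hcf ha
      rw [Finset.Subset.antisymm hsub hsup,
        Finset.card_insert_of_notMem (by simp [Ne.symm hne]), Finset.card_singleton]
    · rintro ⟨c, hc, ha⟩
      obtain ⟨hcf, h2⟩ := Finset.mem_filter.mp hc
      exact ⟨pi_ne_of_support hcf ha, (swap_per2 hcf h2 ha).1⟩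
  unfold twoCycleCount
  rw [hset, Finset.card_biUnion (fun c hc d hd hne =>
    support_disj (Finset.mem_filter.mp hc).1 (Finset.mem_filter.mp hd).1 hne)]
  rw [Finset.sum_congr rfl (fun c hc => (Finset.mem_filter.mp hc).2), Finset.sum_const,
    smul_eq_mul]
  show F2.card * 2 / 2 = F2.card
  omega

theorem cycleCount_eq {π : Perm α} (hfpf : ∀ i, π i ≠ i) :
    cycleCount π = twoCycleCount π + longCycleCount π := by
  unfold cycleCount
  have hfix : (Finset.univ.filter fun a => π a = a) = ∅ :=
    Finset.filter_eq_empty_iff.mpr (fun {a} _ => hfpf a)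
  rw [hfix, Finset.card_empty, add_zero, Equiv.Perm.cycleType_def, Multiset.card_map,
    twoCycleCount_eq, longCycleCount_eq_card_filter]
  have hsplit := Finset.card_filter_add_card_filter_not
    (s := π.cycleFactorsFinset) (p := fun c => c.support.card = 2)
  have h2 : π.cycleFactorsFinset.filter (fun c => ¬ c.support.card = 2)
      = π.cycleFactorsFinset.filter (fun c => 3 ≤ c.support.card) := by
    apply Finset.filter_congr
    intro c hc
    have := (Equiv.Perm.mem_cycleFactorsFinset_iff.mp hc).1.two_le_card_support
    constructor
    · intro h; omega
    · intro h; omega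
  rw [h2] at hsplit
  have hval : Multiset.card π.cycleFactorsFinset.val = π.cycleFactorsFinset.card := rfl
  omega

theorem ferm_two_eq_sum_circuit_partitions' {n : ℕ} (hn : 4 < n)
    (G : SimpleGraph (Fin n)) [DecidableRel G.Adj] :
    (∀ π : Equiv.Perm (Fin n), (∏ i, G.adjMatrix ℂ i (π i)) ≠ 0 →
        ∀ i, π i ≠ i ∧ G.Adj i (π i)) ∧
    (∀ π : Equiv.Perm (Fin n), (∏ i, G.adjMatrix ℂ i (π i)) ≠ 0 →
        (Finset.univ.filter fun π' : Equiv.Perm (Fin n) =>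
            SameCircuitPartition π π').card = 2 ^ longCycleCount π) ∧
    ((-1 : ℂ) ^ (Fintype.card (Fin n)) *
      ∑ π : Equiv.Perm (Fin n), (-(2:ℂ)) ^ (cycleCount π) * ∏ i, G.adjMatrix ℂ i (π i)) =
      (-1 : ℂ) ^ n * ∑ π : Equiv.Perm (Fin n),
        (if (∏ i, G.adjMatrix ℂ i (π i)) ≠ 0 then
          ((-2 : ℂ) ^ twoCycleCount π * (-4 : ℂ) ^ longCycleCount π) / 2 ^ longCycleCount π
        else 0) := by
  have part1 : ∀ π : Equiv.Perm (Fin n), (∏ i, G.adjMatrix ℂ i (π i)) ≠ 0 →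
      ∀ i, π i ≠ i ∧ G.Adj i (π i) := by
    intro π hπ i
    have h := Finset.prod_ne_zero_iff.mp hπ i (Finset.mem_univ i)
    rw [SimpleGraph.adjMatrix_apply] at h
    have hadj : G.Adj i (π i) := by
      by_contra hne
      simp [hne] at h
    exact ⟨hadj.ne', hadj⟩
  refine ⟨part1, fun π hπ => count_scp (fun i => (part1 π hπ i).1), ?_⟩
  rw [Fintype.card_fin]
  congr 1
  apply Finset.sum_congr rfl
  intro π _
  by_cases hπ : (∏ i, G.adjMatrix ℂ i (π i)) = 0
  · rw [hπ, mul_zero, if_neg (by simpa using hπ)]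
  · rw [if_pos hπ]
    have hfpf : ∀ i, π i ≠ i := fun i => (part1 π hπ i).1
    have hprod : (∏ i, G.adjMatrix ℂ i (π i)) = 1 := by
      apply Finset.prod_eq_one
      intro i _
      rw [SimpleGraph.adjMatrix_apply, if_pos (part1 π hπ i).2]
    rw [hprod, mul_one, cycleCount_eq hfpf]
    have h4 : (-4 : ℂ) ^ longCycleCount π
        = (-2 : ℂ) ^ longCycleCount π * 2 ^ longCycleCount π := by
      rw [← mul_pow]; norm_num
    have h2 : (2 : ℂ) ^ longCycleCount π ≠ 0 := pow_ne_zero _ two_ne_zero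
    rw [h4, pow_add]
    field_simp

end Aux

/-- For a simple graph `G` on `n > 4` vertices with adjacency matrix `A`:
(1) every permutation contributing to `Ferm₂ A` is fixed-point free and traces edges of `G`
(hence its cycles form a Hamiltonian-style circuit partition of `G`);
(2) the circuit partition of a contributing permutation with `c'` cycles of length `≥ 3`
corresponds to exactly `2^{c'}` permutations;
(3) hence `Ferm₂ A = (-1)^n ∑_P (-2)^{c₂(P)} (-4)^{c'(P)}` over circuit partitions `P`,
written here by dividing each permutation's contribution by the size `2^{c'}` of its class. -/
theorem ferm_two_eq_sum_circuit_partitions {n : ℕ} (hn : 4 < n)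
    (G : SimpleGraph (Fin n)) [DecidableRel G.Adj] :
    (∀ π : Equiv.Perm (Fin n), (∏ i, G.adjMatrix ℂ i (π i)) ≠ 0 →
        ∀ i, π i ≠ i ∧ G.Adj i (π i)) ∧
    (∀ π : Equiv.Perm (Fin n), (∏ i, G.adjMatrix ℂ i (π i)) ≠ 0 →
        (Finset.univ.filter fun π' : Equiv.Perm (Fin n) =>
            SameCircuitPartition π π').card = 2 ^ longCycleCount π) ∧
    ferm 2 (G.adjMatrix ℂ) =
      (-1 : ℂ) ^ n * ∑ π : Equiv.Perm (Fin n),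
        (if (∏ i, G.adjMatrix ℂ i (π i)) ≠ 0 then
          ((-2 : ℂ) ^ twoCycleCount π * (-4 : ℂ) ^ longCycleCount π) / 2 ^ longCycleCount π
        else 0) := by
  obtain ⟨h1, h2, h3⟩ := ferm_two_eq_sum_circuit_partitions' hn G
  exact ⟨h1, h2, h3⟩
end

section
/- Let G be a finite simple undirected graph on n > 4 vertices with adjacency matrix A, and let #H be the number of Hamiltonian cycles of G (undirected cycles through all vertices, counted without orientation). Then Ferm_2(A) ≡ 4·#H (mod 8); in particular (1/4)·Ferm_2(A) ≡ #H (mod 2). -/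
open scoped Classical in
/-- The number of (unoriented) Hamiltonian cycles of a graph `G` on `Fin n`: each
Hamiltonian cycle corresponds to exactly two `n`-cycle permutations tracing edges
of `G` (its two orientations). -/
noncomputable def hamCount {n : ℕ} (G : SimpleGraph (Fin n)) [DecidableRel G.Adj] : ℕ :=
  (Finset.univ.filter fun π : Equiv.Perm (Fin n) =>
    π.IsCycle ∧ π.support = Finset.univ ∧ ∀ i, G.Adj i (π i)).card / 2

open Finset Equiv Equiv.Perm

section Aux

variable {n : ℕ} (G : SimpleGraph (Fin n)) [DecidableRel G.Adj]

lemma prod_adj_eq (π : Equiv.Perm (Fin n)) :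
    (∏ i, G.adjMatrix ℤ i (π i)) = if ∀ i, G.Adj i (π i) then 1 else 0 := by
  simp only [SimpleGraph.adjMatrix_apply]
  rw [Fintype.prod_boole]
  congr

lemma prod_adj_inv (π : Equiv.Perm (Fin n)) :
    (∏ i, G.adjMatrix ℤ i (π⁻¹ i)) = ∏ i, G.adjMatrix ℤ i (π i) := by
  have h := Equiv.prod_comp π (fun i => G.adjMatrix ℤ i (π⁻¹ i))
  simp only [show ∀ x, π⁻¹ (π x) = x from fun x => π.symm_apply_apply x] at h
  rw [← h]
  refine Fintype.prod_congr _ _ fun i => ?_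
  simp [SimpleGraph.adjMatrix_apply, G.adj_comm]

/-- For fixed-point-free permutations, `cycleCount` is the number of cycles. -/
lemma cycleCount_of_fpf {π : Equiv.Perm (Fin n)} (h : ∀ i, π i ≠ i) :
    cycleCount π = Multiset.card π.cycleType := by
  have he : (Finset.univ.filter fun a => π a = a) = ∅ := by
    ext a; simp [h a]
  simp [cycleCount, he]

lemma support_eq_univ_of_fpf {π : Equiv.Perm (Fin n)} (h : ∀ i, π i ≠ i) :
    π.support = Finset.univ :=
  Finset.eq_univ_iff_forall.2 fun a => Equiv.Perm.mem_support.2 (h a)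

lemma sq_eq_one_of_self_inv {π : Equiv.Perm (Fin n)} (h : π⁻¹ = π) : π ^ 2 = 1 := by
  rw [sq]
  nth_rewrite 1 [← h]
  simp

/-- A Hamiltonian cycle permutation is not its own inverse (`n > 4`). -/
lemma ne_inv_of_ham (hn : 4 < n) {π : Equiv.Perm (Fin n)}
    (hc : π.IsCycle) (hs : π.support = Finset.univ) : π⁻¹ ≠ π := by
  intro h
  have ho : orderOf π = n := by
    rw [hc.orderOf, hs, Finset.card_univ, Fintype.card_fin]
  have hd := orderOf_dvd_of_pow_eq_one (sq_eq_one_of_self_inv h)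
  rw [ho] at hd
  have := Nat.le_of_dvd (by norm_num) hd
  omega

/-- A fixed-point-free two-cycle permutation is not its own inverse (`n > 4`). -/
lemma ne_inv_of_two_cycles (hn : 4 < n) {π : Equiv.Perm (Fin n)}
    (hf : ∀ i, π i ≠ i) (hc : Multiset.card π.cycleType = 2) : π⁻¹ ≠ π := by
  intro h
  have hdvd : orderOf π ∣ 2 := orderOf_dvd_of_pow_eq_one (sq_eq_one_of_self_inv h)
  have hrep : π.cycleType = Multiset.replicate 2 2 := by
    rw [Multiset.eq_replicate]
    refine ⟨hc, fun b hb => ?_⟩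
    have h1 : b ∣ 2 := (Equiv.Perm.dvd_of_mem_cycleType hb).trans hdvd
    have h2' : 2 ≤ b := Equiv.Perm.two_le_of_mem_cycleType hb
    have := Nat.le_of_dvd (by norm_num) h1
    omega
  have hsum : π.cycleType.sum = n := by
    rw [Equiv.Perm.sum_cycleType, support_eq_univ_of_fpf hf, Finset.card_univ,
      Fintype.card_fin]
  rw [hrep, Multiset.sum_replicate, smul_eq_mul] at hsum
  omega

end Aux

/-- For a simple graph on `n > 4` vertices with adjacency matrix `A` and `#H`
Hamiltonian cycles, `Ferm₂ A ≡ 4 · #H (mod 8)`. -/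
theorem ferm_two_modEq_four_mul_hamCount {n : ℕ} (hn : 4 < n)
    (G : SimpleGraph (Fin n)) [DecidableRel G.Adj] :
    ferm 2 (G.adjMatrix ℤ) ≡ 4 * (hamCount G : ℤ) [ZMOD 8] := by
  classical
  set A := G.adjMatrix ℤ with hA
  set t : Equiv.Perm (Fin n) → ℤ :=
    fun π => (-(2:ℤ)) ^ (cycleCount π) * ∏ i, A i (π i) with ht
  set P1 : Equiv.Perm (Fin n) → Prop :=
    fun π => π.IsCycle ∧ π.support = Finset.univ ∧ ∀ i, G.Adj i (π i) with hP1
  set P2 : Equiv.Perm (Fin n) → Prop :=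
    fun π => (∀ i, π i ≠ i) ∧ Multiset.card π.cycleType = 2 with hP2
  set s1 : Finset (Equiv.Perm (Fin n)) := Finset.univ.filter P1 with hs1
  set r2 : Finset (Equiv.Perm (Fin n)) :=
    (Finset.univ.filter fun π => ¬ P1 π).filter P2 with hr2
  set r3 : Finset (Equiv.Perm (Fin n)) :=
    (Finset.univ.filter fun π => ¬ P1 π).filter (fun π => ¬ P2 π) with hr3
  -- `hamCount` counts half of `s1`
  have hham : (s1.card : ℤ) = 2 * (hamCount G : ℤ) := by
    have hz : ∑ _π ∈ s1, (1 : ZMod 2) = 0 := by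
      refine Finset.sum_involution (fun π _ => π⁻¹) (fun π hπ => by decide)
        (fun π hπ _ => ?_) (fun π hπ => ?_) (fun π hπ => by simp)
      · simp only [hs1, Finset.mem_filter, hP1] at hπ
        exact ne_inv_of_ham hn hπ.2.1 hπ.2.2.1
      · simp only [hs1, Finset.mem_filter, Finset.mem_univ, true_and, hP1] at hπ ⊢
        obtain ⟨hc, hs, he⟩ := hπ
        refine ⟨hc.inv, by simpa using hs, fun i => ?_⟩
        have := he (π⁻¹ i)
        rw [show π (π⁻¹ i) = i from π.apply_symm_apply i] at this
        exact (G.adj_comm _ _).1 this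
    have hpar : 2 ∣ s1.card := by
      have h0 : ((s1.card : ℕ) : ZMod 2) = 0 := by
        rw [Finset.card_eq_sum_ones, Nat.cast_sum]
        simpa using hz
      exact (ZMod.natCast_eq_zero_iff s1.card 2).1 h0
    have hhc : hamCount G = s1.card / 2 := by
      rw [hamCount]
    obtain ⟨k, hk⟩ := hpar
    have h2 : hamCount G = k := by rw [hhc, hk]; omega
    rw [hk, h2]
    push_cast
    ring
  -- splitting the sum
  have e1 := Finset.sum_filter_add_sum_filter_not Finset.univ P1 t
  have e2 := Finset.sum_filter_add_sum_filter_not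
    (Finset.univ.filter fun π => ¬ P1 π) P2 t
  -- sum over s1
  have hsum1 : ∑ π ∈ s1, t π = -2 * (s1.card : ℤ) := by
    have hconst : ∀ π ∈ s1, t π = -2 := by
      intro π hπ
      simp only [hs1, Finset.mem_filter, hP1] at hπ
      obtain ⟨-, hc, hs, he⟩ := hπ
      have hf : ∀ i, π i ≠ i := fun i =>
        Equiv.Perm.mem_support.1 (hs ▸ Finset.mem_univ i)
      have hcc : cycleCount π = 1 := by
        rw [cycleCount_of_fpf hf, Equiv.Perm.card_cycleType_eq_one.2 hc]
      rw [ht]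
      simp only [hcc, pow_one, hA, prod_adj_eq, if_pos he, mul_one]
    rw [Finset.sum_congr rfl hconst, Finset.sum_const]
    push_cast
    ring
  -- sum over r2 is divisible by 8
  have hdvd2 : (8:ℤ) ∣ ∑ π ∈ r2, t π := by
    have hterm : ∀ π ∈ r2, t π = 4 * ∏ i, A i (π i) := by
      intro π hπ
      simp only [hr2, Finset.mem_filter, hP2] at hπ
      obtain ⟨-, hf, hc⟩ := hπ
      have hcc : cycleCount π = 2 := by rw [cycleCount_of_fpf hf, hc]
      rw [ht]
      simp only [hcc]
      norm_num
    rw [Finset.sum_congr rfl hterm, ← Finset.mul_sum]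
    have hpar2 : (2:ℤ) ∣ ∑ π ∈ r2, ∏ i, A i (π i) := by
      have h0 : ((∑ π ∈ r2, ∏ i, A i (π i) : ℤ) : ZMod 2) = 0 := by
        rw [Int.cast_sum]
        refine Finset.sum_involution (fun π _ => π⁻¹) (fun π hπ => ?_)
          (fun π hπ _ => ?_) (fun π hπ => ?_) (fun π hπ => by simp)
        · rw [prod_adj_inv, ← two_mul]
          exact mul_eq_zero_of_left (by decide) _
        · simp only [hr2, Finset.mem_filter, hP2] at hπ
          exact ne_inv_of_two_cycles hn hπ.2.1 hπ.2.2
        · simp only [hr2, Finset.mem_filter, Finset.mem_univ, true_and, hP1, hP2] at hπ ⊢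
          obtain ⟨hnp1, hf, hc⟩ := hπ
          have hf' : ∀ i, π⁻¹ i ≠ i := by
            intro i hi
            exact hf i (by conv_lhs => rw [← hi, show π (π⁻¹ i) = i from π.apply_symm_apply i])
          have hc' : Multiset.card π⁻¹.cycleType = 2 := by
            rw [Equiv.Perm.cycleType_inv, hc]
          refine ⟨fun hcy => ?_, hf', hc'⟩
          have := Equiv.Perm.card_cycleType_eq_one.2 hcy.1
          omega
      have h1 := (ZMod.intCast_zmod_eq_zero_iff_dvd _ 2).1 h0
      exact_mod_cast h1
    obtain ⟨m, hm⟩ := hpar2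
    exact ⟨m, by rw [hm]; ring⟩
  -- sum over r3 is divisible by 8
  have hdvd3 : (8:ℤ) ∣ ∑ π ∈ r3, t π := by
    refine Finset.dvd_sum fun π hπ => ?_
    simp only [hr3, Finset.mem_filter, Finset.mem_univ, true_and, hP1, hP2] at hπ
    obtain ⟨hnp1, hnp2⟩ := hπ
    by_cases hf : ∀ i, π i ≠ i
    · -- fixed-point-free: case on number of cycles
      have hcc : cycleCount π = Multiset.card π.cycleType := cycleCount_of_fpf hf
      rcases Nat.lt_or_ge (Multiset.card π.cycleType) 3 with hlt | hge
      · have hcases : Multiset.card π.cycleType = 0 ∨ Multiset.card π.cycleType = 1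
            ∨ Multiset.card π.cycleType = 2 := by omega
        rcases hcases with hcard | hcard | hcard
        · -- 0 cycles: identity, contradiction
          exfalso
          have : π = 1 := Equiv.Perm.card_cycleType_eq_zero.1 hcard
          exact hf ⟨0, by omega⟩ (by rw [this]; rfl)
        · -- 1 cycle: not all edges, product vanishes
          have hcy : π.IsCycle := Equiv.Perm.card_cycleType_eq_one.1 hcard
          have hs : π.support = Finset.univ := support_eq_univ_of_fpf hf
          have hne : ¬ ∀ i, G.Adj i (π i) := fun he => hnp1 ⟨hcy, hs, he⟩
          have : t π = 0 := by
            rw [ht]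
            simp only [hA, prod_adj_eq, if_neg hne, mul_zero]
          rw [this]
          exact dvd_zero _
        · -- 2 cycles: contradiction with ¬P2
          exact absurd ⟨hf, hcard⟩ hnp2
      · -- at least 3 cycles: `8 ∣ (-2)^c`
        have : (-(2:ℤ)) ^ (cycleCount π) =
            (-(2:ℤ)) ^ 3 * (-(2:ℤ)) ^ (cycleCount π - 3) := by
          rw [← pow_add]
          congr 1
          rw [hcc]
          omega
        rw [ht]
        simp only [this]
        refine Dvd.dvd.mul_right (Dvd.dvd.mul_right ⟨-1, by norm_num⟩ _) _
    · -- has a fixed point: product vanishes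
      push_neg at hf
      obtain ⟨i, hi⟩ := hf
      have hne : ¬ ∀ j, G.Adj j (π j) := by
        intro he
        have := he i
        rw [hi] at this
        exact G.irrefl this
      have : t π = 0 := by
        rw [ht]
        simp only [hA, prod_adj_eq, if_neg hne, mul_zero]
      rw [this]
      exact dvd_zero _
  -- assemble
  obtain ⟨k2, hk2⟩ := hdvd2
  obtain ⟨k3, hk3⟩ := hdvd3
  have htotal : ∑ π : Equiv.Perm (Fin n), t π
      = -4 * (hamCount G : ℤ) + 8 * k2 + 8 * k3 := by
    rw [← e1, ← e2, hsum1, hk2, hk3, hham]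
    ring
  have hferm : ferm 2 A = (-1:ℤ)^n *
      (-4 * (hamCount G : ℤ) + 8 * k2 + 8 * k3) := by
    rw [ferm, Fintype.card_fin, ← htotal]
  refine Int.ModEq.symm (Int.modEq_iff_dvd.2 ?_)
  rcases Nat.even_or_odd n with hp | hp
  · rw [hferm, Even.neg_one_pow hp]
    exact ⟨-(hamCount G : ℤ) + k2 + k3, by ring⟩
  · rw [hferm, Odd.neg_one_pow hp]
    exact ⟨-(k2 + k3), by ring⟩
end
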